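/- For every real number α, if liminf_{q→∞} q·‖qα‖ ≠ 1/√5, then liminf_{q→∞} q·‖qα‖ ≤ 1/(2√2). -/

import Mathlib

/-- Distance from a real number to the nearest integer. -/
noncomputable def distNearestInt (t : ℝ) : ℝ := ⨅ n : ℤ, |t - n|

namespace HurwitzAux

open Filter

lemma round_min (t : ℝ) (n : ℤ) : |t - round t| ≤ |t - n| := by
  by_contra hlt
  push_neg at hlt
  have h1 : |t - round t| ≤ 1/2 := abs_sub_round t
  have h2 : |t - (n:ℝ)| < 1/2 := lt_of_lt_of_le hlt h1
  have hne : round t ≠ n → (1:ℝ) ≤ |(round t : ℝ) - n| := by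
    intro hne
    have h3 : (1:ℤ) ≤ |round t - n| := Int.one_le_abs (sub_ne_zero.2 hne)
    have h4 : (1:ℝ) ≤ |(round t : ℝ) - (n:ℝ)| := by exact_mod_cast h3
    exact h4
  rcases eq_or_ne (round t) n with he | he
  · rw [he] at hlt; exact absurd hlt (not_lt.2 le_rfl)
  · have := hne he
    have : |(round t : ℝ) - n| ≤ |t - round t| + |t - n| := by
      have := abs_sub_abs_le_abs_sub ((round t:ℝ)) (n:ℝ)
      calc |(round t:ℝ) - n| = |(t - n) - (t - round t)| := by ring_nf
      _ ≤ |t - n| + |t - round t| := abs_sub _ _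
      _ = |t - round t| + |t - n| := by ring
    linarith [hne he]

lemma distNearestInt_eq (t : ℝ) : distNearestInt t = |t - round t| := by
  apply le_antisymm
  · exact ciInf_le ⟨0, fun x ⟨n, hn⟩ => hn ▸ abs_nonneg _⟩ (round t)
  · exact le_ciInf (round_min t)

lemma distNearestInt_le (t : ℝ) (n : ℤ) : distNearestInt t ≤ |t - n| := by
  rw [distNearestInt_eq]; exact round_min t n

lemma distNearestInt_nonneg (t : ℝ) : 0 ≤ distNearestInt t := by
  rw [distNearestInt_eq]; exact abs_nonneg _

lemma distNearestInt_intCast (n : ℤ) : distNearestInt (n : ℝ) = 0 := by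
  have h := distNearestInt_le (n:ℝ) n
  simp at h
  exact le_antisymm h (distNearestInt_nonneg _)

/-! ### Continued fraction machinery -/

variable (α : ℝ)

/-- iterated Gauss map values -/
noncomputable def bet : ℕ → ℝ
  | 0 => Int.fract α
  | n+1 => Int.fract (1 / bet n)

/-- partial quotients (shifted) -/
noncomputable def ca (n : ℕ) : ℤ := ⌊1 / bet α n⌋

/-- denominators, Q 0 = 0, Q 1 = 1 -/
noncomputable def Q : ℕ → ℤ
  | 0 => 0
  | 1 => 1
  | n+2 => ca α n * Q (n+1) + Q n

/-- numerators -/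
noncomputable def P : ℕ → ℤ
  | 0 => 1
  | 1 => ⌊α⌋
  | n+2 => ca α n * P (n+1) + P n

/-- |q_n α - p_n| -/
noncomputable def D (n : ℕ) : ℝ := ∏ i ∈ Finset.range n, bet α i

variable {α}

lemma bet_irrational (hα : Irrational α) : ∀ n, Irrational (bet α n) := by
  intro n
  induction n with
  | zero =>
    show Irrational (Int.fract α)
    rw [Int.fract]
    exact hα.sub_intCast _
  | succ n ih =>
    show Irrational (Int.fract (1 / bet α n))
    rw [Int.fract, one_div]
    exact ih.inv.sub_intCast _

lemma bet_pos (hα : Irrational α) (n : ℕ) : 0 < bet α n := by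
  have hne : bet α n ≠ 0 := by
    intro h
    have := bet_irrational hα n
    rw [h] at this
    exact this ⟨0, by norm_num⟩
  have hnn : 0 ≤ bet α n := by
    cases n with
    | zero => exact Int.fract_nonneg _
    | succ m => exact Int.fract_nonneg _
  exact lt_of_le_of_ne hnn (Ne.symm hne)

lemma bet_lt_one (n : ℕ) : bet α n < 1 := by
  cases n with
  | zero => exact Int.fract_lt_one _
  | succ m => exact Int.fract_lt_one _

lemma one_lt_inv_bet (hα : Irrational α) (n : ℕ) : 1 < 1 / bet α n :=
  (one_lt_div (bet_pos hα n)).2 (bet_lt_one (α := α) n)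

lemma one_le_ca (hα : Irrational α) (n : ℕ) : 1 ≤ ca α n := by
  rw [ca, Int.le_floor]
  exact_mod_cast le_of_lt (one_lt_inv_bet hα n)

lemma bet_succ (n : ℕ) : bet α (n+1) = 1 / bet α n - ca α n := by
  show Int.fract (1 / bet α n) = _
  rw [Int.fract, ca]

lemma bet_key (hα : Irrational α) (n : ℕ) :
    bet α n * bet α (n+1) = 1 - ca α n * bet α n := by
  have h := bet_succ (α := α) n
  have hb := (bet_pos hα n).ne'
  rw [h, mul_sub, mul_one_div_cancel hb]
  ring

@[simp] lemma Q_zero : Q α 0 = 0 := rfl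
@[simp] lemma Q_one : Q α 1 = 1 := rfl
lemma Q_rec (n : ℕ) : Q α (n+2) = ca α n * Q α (n+1) + Q α n := rfl
@[simp] lemma P_zero : P α 0 = 1 := rfl
@[simp] lemma P_one : P α 1 = ⌊α⌋ := rfl
lemma P_rec (n : ℕ) : P α (n+2) = ca α n * P α (n+1) + P α n := rfl
lemma bet_zero : bet α 0 = α - ⌊α⌋ := rfl

lemma D_zero : D α 0 = 1 := by simp [D]

lemma D_succ (n : ℕ) : D α (n+1) = D α n * bet α n := Finset.prod_range_succ _ _

lemma D_pos (hα : Irrational α) (n : ℕ) : 0 < D α n :=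
  Finset.prod_pos fun i _ => bet_pos hα i

lemma D_le_one (hα : Irrational α) (n : ℕ) : D α n ≤ 1 := by
  induction n with
  | zero => simp [D_zero]
  | succ m ih =>
    rw [D_succ]
    nlinarith [D_pos hα m, bet_pos hα m, bet_lt_one (α := α) m]

lemma D_lt (hα : Irrational α) (n : ℕ) : D α (n+1) < D α n := by
  rw [D_succ]
  nlinarith [D_pos hα n, bet_pos hα n, bet_lt_one (α := α) n]

lemma Q_nonneg (hα : Irrational α) : ∀ n, 0 ≤ Q α n := by
  intro n
  induction n using Nat.twoStepInduction with
  | zero => simp [Q]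
  | one => simp [Q]
  | more n ih1 ih2 =>
    show 0 ≤ ca α n * Q α (n+1) + Q α n
    have := one_le_ca hα n
    nlinarith

lemma Q_pos (hα : Irrational α) : ∀ n, 1 ≤ Q α (n+1) := by
  intro n
  induction n using Nat.twoStepInduction with
  | zero => simp [Q]
  | one =>
    show 1 ≤ ca α 0 * Q α 1 + Q α 0
    have := one_le_ca hα 0
    simp [Q]; omega
  | more n ih1 ih2 =>
    show 1 ≤ ca α (n+1) * Q α (n+2) + Q α (n+1)
    have := one_le_ca hα (n+1)
    have := Q_nonneg hα (n+1)
    nlinarith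

lemma Q_le (hα : Irrational α) (n : ℕ) : Q α n ≤ Q α (n+1) := by
  cases n with
  | zero => simp [Q]
  | succ m =>
    show Q α (m+1) ≤ ca α m * Q α (m+1) + Q α m
    have h1 := one_le_ca hα m
    have h2 := Q_nonneg hα m
    have h3 := Q_pos hα m
    nlinarith

lemma Q_mono (hα : Irrational α) : Monotone (Q α) :=
  monotone_nat_of_le_succ (Q_le hα)

lemma Q_lt (hα : Irrational α) (n : ℕ) : Q α (n+2) < Q α (n+3) := by
  show Q α (n+2) < ca α (n+1) * Q α (n+2) + Q α (n+1)
  have h1 := one_le_ca hα (n+1)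
  have h2 := Q_pos hα n
  have h3 := Q_pos hα (n+1)
  nlinarith

lemma Q_ge (hα : Irrational α) : ∀ n : ℕ, (n : ℤ) ≤ Q α (n+2) := by
  intro n
  induction n with
  | zero => simp [Q_nonneg hα]
  | succ m ih =>
    show ((m:ℤ)+1) ≤ Q α (m+3)
    have h1 := Q_lt hα m
    have h2 := Q_pos hα (m+1)
    omega

lemma theta (hα : Irrational α) :
    ∀ n, (Q α (n+1) : ℝ) * α - P α (n+1) = (-1)^n * D α (n+1) := by
  intro n
  induction n using Nat.twoStepInduction with
  | zero =>
    have hD : D α 1 = bet α 0 := by rw [D_succ, D_zero, one_mul]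
    rw [Q_one, P_one, hD, bet_zero, pow_zero]
    push_cast
    ring
  | one =>
    have hD2 : D α 2 = bet α 0 * bet α 1 := by
      rw [D_succ, D_succ, D_zero, one_mul]
    have hk := bet_key hα 0
    have hb0 : bet α 0 = α - ⌊α⌋ := rfl
    rw [Q_rec, P_rec, hD2, Q_one, Q_zero, P_one, P_zero]
    push_cast
    rw [hb0] at hk ⊢
    push_cast at hk
    linear_combination hk
  | more n ih1 ih2 =>
    have hk := bet_key hα (n+1)
    have hD3 : D α (n+3) = D α (n+1) * (bet α (n+1) * bet α (n+2)) := by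
      rw [D_succ, D_succ]; ring
    have hD2 : D α (n+2) = D α (n+1) * bet α (n+1) := D_succ _
    rw [Q_rec, P_rec, hD3, hk]
    rw [hD2] at ih2
    have hpow : ((-1:ℝ))^(n+1) = -((-1:ℝ))^n := by rw [pow_succ]; ring
    have hpow2 : ((-1:ℝ))^(n+2) = ((-1:ℝ))^n := by rw [pow_succ, pow_succ]; ring
    rw [hpow] at ih2
    rw [hpow2]
    push_cast
    push_cast at ih1 ih2
    linear_combination (ca α (n+1) : ℝ) * ih2 + ih1


lemma dets (hα : Irrational α) :
    ∀ n, Q α (n+1) * P α n - P α (n+1) * Q α n = (-1)^n := by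
  intro n
  induction n with
  | zero => simp [Q_one, P_one, Q_zero, P_zero]
  | succ m ih =>
    rw [Q_rec, P_rec, pow_succ]
    ring_nf
    ring_nf at ih
    linarith [ih]

lemma ident (hα : Irrational α) (n : ℕ) :
    (Q α (n+2) : ℝ) * D α (n+1) + (Q α (n+1) : ℝ) * D α (n+2) = 1 := by
  have h1 := theta hα n
  have h2 := theta hα (n+1)
  have h3 := dets hα (n+1)
  have h3' : ((Q α (n+2) : ℝ) * P α (n+1) - (P α (n+2) : ℝ) * Q α (n+1)) = (-1)^(n+1) := by
    exact_mod_cast h3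
  have hss : ((-1:ℝ))^n * ((-1:ℝ))^n = 1 := by
    rw [← pow_add, ← two_mul, pow_mul]; norm_num
  have hp1 : ((-1:ℝ))^(n+1) = -((-1:ℝ))^n := by rw [pow_succ]; ring
  rw [hp1] at h2 h3'
  generalize hgen : ((-1:ℝ))^n = s at h1 h2 h3' hss
  linear_combination (-s * (Q α (n+2) : ℝ)) * h1 + (s * (Q α (n+1) : ℝ)) * h2 - s * h3'
    + (1 - (Q α (n+2) : ℝ) * D α (n+1) - (Q α (n+1) : ℝ) * D α (n+2)) * hss

lemma bestApprox (hα : Irrational α) (n : ℕ) (q p : ℤ) (hq1 : 1 ≤ q) (hq2 : q < Q α (n+2)) :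
    D α (n+1) ≤ |(q:ℝ) * α - p| := by
  set Q1 := Q α (n+1) with hQ1
  set Q2 := Q α (n+2) with hQ2
  set P1 := P α (n+1) with hP1
  set P2 := P α (n+2) with hP2
  have hdet : Q2 * P1 - P2 * Q1 = (-1)^(n+1) := dets hα (n+1)
  have hsz : ((-1:ℤ))^(n+1) * ((-1:ℤ))^(n+1) = 1 := by
    rw [← pow_add, ← two_mul, pow_mul]; norm_num
  set x : ℤ := (-1)^(n+1) * (Q2 * p - P2 * q) with hx
  set y : ℤ := (-1)^(n+1) * (P1 * q - Q1 * p) with hy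
  have hq : q = x * Q1 + y * Q2 := by
    rw [hx, hy]
    have : x * Q1 + y * Q2 = (-1)^(n+1) * ((Q2 * P1 - P2 * Q1) * q) := by rw [hx, hy]; ring
    rw [hx, hy] at this
    rw [this, hdet, ← mul_assoc, hsz, one_mul]
  have hp : p = x * P1 + y * P2 := by
    have : x * P1 + y * P2 = (-1)^(n+1) * ((Q2 * P1 - P2 * Q1) * p) := by rw [hx, hy]; ring
    rw [this, hdet, ← mul_assoc, hsz, one_mul]
  -- real versions
  have t1 := theta hα n
  have t2 := theta hα (n+1)
  have hD1 := D_pos hα (n+1)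
  have hD2 := D_pos hα (n+2)
  have hQ1pos : 1 ≤ Q1 := Q_pos hα n
  have hQ2pos : 1 ≤ Q2 := Q_pos hα (n+1)
  have expand : (q:ℝ) * α - p = (x:ℝ) * ((Q1:ℝ) * α - P1) + (y:ℝ) * ((Q2:ℝ) * α - P2) := by
    have hqr : (q:ℝ) = (x:ℝ) * Q1 + (y:ℝ) * Q2 := by exact_mod_cast congrArg (Int.cast : ℤ → ℝ) hq
    have hpr : (p:ℝ) = (x:ℝ) * P1 + (y:ℝ) * P2 := by exact_mod_cast congrArg (Int.cast : ℤ → ℝ) hp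
    rw [hqr, hpr]; ring
  rw [t1, t2] at expand
  have hp1 : ((-1:ℝ))^(n+1) = -((-1:ℝ))^n := by rw [pow_succ]; ring
  rw [hp1] at expand
  -- |q α - p| = |x * D(n+1) - y * D(n+2)|
  have habs : |(q:ℝ) * α - p| = |(x:ℝ) * D α (n+1) - (y:ℝ) * D α (n+2)| := by
    rw [expand]
    have : (x:ℝ) * ((-1)^n * D α (n+1)) + (y:ℝ) * (-(-1)^n * D α (n+2))
        = (-1)^n * ((x:ℝ) * D α (n+1) - (y:ℝ) * D α (n+2)) := by ring
    rw [this, abs_mul, abs_pow, abs_neg, abs_one, one_pow, one_mul]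
  rw [habs]
  -- case analysis
  rcases lt_trichotomy y 0 with hy0 | hy0 | hy0
  · -- y < 0
    rcases lt_trichotomy x 0 with hx0 | hx0 | hx0
    · -- x < 0, y < 0 : q < 0, contradiction
      exfalso
      have : q ≤ -Q1 - Q2 := by
        rw [hq]
        nlinarith
      omega
    · -- x = 0: q = y * Q2 ≤ -Q2 < 0 contradiction
      exfalso
      rw [hx0] at hq
      simp at hq
      nlinarith
    · -- x > 0, y < 0 : value ≥ D1 + D2
      have hxr : (1:ℝ) ≤ (x:ℝ) := by exact_mod_cast hx0
      have hyr : (y:ℝ) ≤ -1 := by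
        have h5 : y ≤ -1 := by omega
        exact_mod_cast h5
      have : D α (n+1) + D α (n+2) ≤ (x:ℝ) * D α (n+1) - (y:ℝ) * D α (n+2) := by nlinarith
      calc D α (n+1) ≤ (x:ℝ) * D α (n+1) - (y:ℝ) * D α (n+2) := by nlinarith
      _ ≤ |(x:ℝ) * D α (n+1) - (y:ℝ) * D α (n+2)| := le_abs_self _
  · -- y = 0 : q = x Q1, x ≥ 1
    rw [hy0] at hq
    simp at hq
    have hx1 : 1 ≤ x := by nlinarith
    have hxr : (1:ℝ) ≤ (x:ℝ) := by exact_mod_cast hx1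
    rw [hy0]
    push_cast
    rw [zero_mul, sub_zero, abs_mul, abs_of_nonneg (le_of_lt hD1)]
    nlinarith [abs_nonneg ((x:ℝ)), le_abs_self ((x:ℝ)), hxr]
  · -- y > 0
    rcases lt_trichotomy x 0 with hx0 | hx0 | hx0
    · -- x < 0, y > 0 : value ≤ -(D1+D2)
      have hxr : (x:ℝ) ≤ -1 := by
        have h5 : x ≤ -1 := by omega
        exact_mod_cast h5
      have hyr : (1:ℝ) ≤ (y:ℝ) := by exact_mod_cast hy0
      have hle : (x:ℝ) * D α (n+1) - (y:ℝ) * D α (n+2) ≤ -(D α (n+1)) := by nlinarith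
      calc D α (n+1) ≤ -((x:ℝ) * D α (n+1) - (y:ℝ) * D α (n+2)) := by nlinarith
      _ ≤ |(x:ℝ) * D α (n+1) - (y:ℝ) * D α (n+2)| := neg_le_abs _
    · -- x = 0 : q = y Q2 ≥ Q2 contradiction
      exfalso
      rw [hx0] at hq
      simp at hq
      nlinarith
    · -- x > 0, y > 0 : q ≥ Q1 + Q2 contradiction
      exfalso
      have : Q1 + Q2 ≤ q := by rw [hq]; nlinarith
      omega

lemma dist_conv (hα : Irrational α) (n : ℕ) :
    distNearestInt ((Q α (n+2) : ℝ) * α) = D α (n+2) := by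
  apply le_antisymm
  · have h := distNearestInt_le ((Q α (n+2) : ℝ) * α) (P α (n+2))
    have ht := theta hα (n+1)
    rw [ht] at h
    rwa [abs_mul, abs_pow, abs_neg, abs_one, one_pow, one_mul,
      abs_of_nonneg (le_of_lt (D_pos hα (n+2)))] at h
  · rw [distNearestInt_eq]
    exact bestApprox hα (n+1) (Q α (n+2)) (round ((Q α (n+2) : ℝ) * α))
      (Q_pos hα (n+1)) (Q_lt hα n)

/-! ### sequences t and r -/

variable (α)

/-- r n = q_n * |q_n α - p_n| -/
noncomputable def rs (n : ℕ) : ℝ := (Q α n : ℝ) * D α n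

/-- t n = q_n / q_{n+1} -/
noncomputable def ts (n : ℕ) : ℝ := (Q α n : ℝ) / (Q α (n+1) : ℝ)

variable {α}

lemma Qr_pos (hα : Irrational α) (n : ℕ) : (0:ℝ) < (Q α (n+1) : ℝ) := by
  have := Q_pos hα n
  exact_mod_cast lt_of_lt_of_le zero_lt_one (by exact_mod_cast this)

lemma ts_pos (hα : Irrational α) (n : ℕ) : 0 < ts α (n+1) :=
  div_pos (Qr_pos hα n) (Qr_pos hα (n+1))

lemma ts_nonneg (hα : Irrational α) (n : ℕ) : 0 ≤ ts α n := by
  cases n with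
  | zero =>
    show (0:ℝ) ≤ (Q α 0 : ℝ) / (Q α 1 : ℝ)
    simp [Q_zero]
  | succ m => exact le_of_lt (ts_pos hα m)

lemma ts_le_one (hα : Irrational α) (n : ℕ) : ts α n ≤ 1 := by
  rw [ts, div_le_one (Qr_pos hα n)]
  exact_mod_cast Q_le hα n

lemma ca_cast_ge (hα : Irrational α) (n : ℕ) : (1:ℝ) ≤ (ca α n : ℝ) := by
  exact_mod_cast one_le_ca hα n

lemma ts_rec (hα : Irrational α) (n : ℕ) :
    ts α (n+1) = 1 / ((ca α n : ℝ) + ts α n) := by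
  have hQ1 : (0:ℝ) < (Q α (n+1) : ℝ) := Qr_pos hα n
  have hQ2 : (0:ℝ) < (Q α (n+2) : ℝ) := Qr_pos hα (n+1)
  have hrec : (Q α (n+2) : ℝ) = (ca α n : ℝ) * (Q α (n+1) : ℝ) + (Q α n : ℝ) := by
    exact_mod_cast congrArg (Int.cast : ℤ → ℝ) (Q_rec (α := α) n)
  have hpos : (0:ℝ) < (ca α n : ℝ) + ts α n := by
    have := ca_cast_ge hα n
    have := ts_nonneg hα n
    linarith
  rw [eq_div_iff (ne_of_gt hpos), ts, ts]
  field_simp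
  linear_combination (-1:ℝ) * hrec

lemma rs_nonneg (hα : Irrational α) (n : ℕ) : 0 ≤ rs α n :=
  mul_nonneg (by exact_mod_cast Q_nonneg hα n) (le_of_lt (D_pos hα n))

lemma rs_pos (hα : Irrational α) (n : ℕ) : 0 < rs α (n+1) :=
  mul_pos (Qr_pos hα n) (D_pos hα (n+1))

lemma rs_le_one (hα : Irrational α) (n : ℕ) : rs α n ≤ 1 := by
  cases n with
  | zero => simp [rs, Q_zero]
  | succ m =>
    have hid := ident hα m
    have h1 : (Q α (m+1) : ℝ) ≤ (Q α (m+2) : ℝ) := by exact_mod_cast Q_le hα (m+1)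
    have h2 := D_pos hα (m+1)
    have h3 := D_pos hα (m+2)
    have h4 := Qr_pos hα m
    show (Q α (m+1) : ℝ) * D α (m+1) ≤ 1
    nlinarith

lemma rs_eq (hα : Irrational α) (n : ℕ) :
    rs α (n+1) = ts α (n+1) * (1 - ts α (n+1) * rs α (n+2)) := by
  have hid := ident hα n
  have hQ2 : (0:ℝ) < (Q α (n+2) : ℝ) := Qr_pos hα (n+1)
  have e1 : ts α (n+1) * rs α (n+2) = (Q α (n+1) : ℝ) * D α (n+2) := by
    rw [ts, rs]
    field_simp
  rw [e1]
  have e2 : 1 - (Q α (n+1) : ℝ) * D α (n+2) = (Q α (n+2) : ℝ) * D α (n+1) := by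
    linarith
  rw [e2, rs, ts]
  field_simp

lemma rs_le_ts (hα : Irrational α) (n : ℕ) : rs α (n+1) ≤ ts α (n+1) := by
  have h := rs_eq hα n
  have h1 := ts_pos hα n
  have h2 := rs_nonneg hα (n+2)
  nlinarith [mul_nonneg (le_of_lt h1) (mul_nonneg (le_of_lt h1) h2)]

/-! ### bridging -/

lemma toNat_cast (hα : Irrational α) (n : ℕ) :
    (((Q α n).toNat : ℕ) : ℝ) = (Q α n : ℝ) := by
  have := Q_nonneg hα n
  exact_mod_cast congrArg (Int.cast : ℤ → ℝ) (Int.toNat_of_nonneg this)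

lemma f_at_Q (hα : Irrational α) (n : ℕ) :
    (((Q α (n+2)).toNat : ℕ) : ℝ) * distNearestInt (((Q α (n+2)).toNat : ℕ) * α)
      = rs α (n+2) := by
  rw [toNat_cast hα, dist_conv hα n, rs]

lemma tendsto_QtoNat (hα : Irrational α) :
    Filter.Tendsto (fun n => (Q α n).toNat) Filter.atTop Filter.atTop := by
  rw [Filter.tendsto_atTop]
  intro b
  rw [Filter.eventually_atTop]
  refine ⟨b + 2, fun n hn => ?_⟩
  obtain ⟨m, rfl⟩ : ∃ m, n = m + 2 := ⟨n - 2, by omega⟩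
  have h2 : (b:ℤ) ≤ Q α (m+2) := le_trans (Q_ge hα b) (Q_mono hα (by omega))
  omega

lemma freq_f_le_one (hα : Irrational α) :
    ∃ᶠ q : ℕ in Filter.atTop, (q : ℝ) * distNearestInt (q * α) ≤ 1 := by
  apply (tendsto_QtoNat hα).frequently
  apply Filter.Frequently.mono
    (Filter.Eventually.frequently (Filter.eventually_ge_atTop 2))
  intro n hn
  obtain ⟨m, rfl⟩ : ∃ m, n = m + 2 := ⟨n - 2, by omega⟩
  show (((Q α (m+2)).toNat : ℕ) : ℝ) * distNearestInt (((Q α (m+2)).toNat : ℕ) * α) ≤ 1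
  rw [f_at_Q hα m]
  exact rs_le_one hα (m+2)

open Filter in
lemma liminf_f_le_liminf_rs (hα : Irrational α) :
    liminf (fun q : ℕ => (q : ℝ) * distNearestInt (q * α)) atTop ≤ liminf (rs α) atTop := by
  by_contra hcon
  push_neg at hcon
  obtain ⟨c, hc1, hc2⟩ := exists_between hcon
  have hcob : IsCoboundedUnder (· ≥ ·) atTop (rs α) :=
    isCoboundedUnder_ge_of_eventually_le atTop (x := 1) (Eventually.of_forall (rs_le_one hα))
  have hfreq : ∃ᶠ n in atTop, rs α n < c := frequently_lt_of_liminf_lt hcob hc1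
  have hfreq2 : ∃ᶠ n : ℕ in atTop,
      (((Q α n).toNat : ℕ) : ℝ) * distNearestInt (((Q α n).toNat : ℕ) * α) < c := by
    refine (hfreq.and_eventually (eventually_ge_atTop 2)).mono ?_
    rintro n ⟨hlt, hn⟩
    obtain ⟨m, rfl⟩ : ∃ m, n = m + 2 := ⟨n - 2, by omega⟩
    rw [f_at_Q hα m]
    exact hlt
  have hfreq3 : ∃ᶠ q : ℕ in atTop, (q : ℝ) * distNearestInt (q * α) < c :=
    (tendsto_QtoNat hα).frequently hfreq2
  have hb : IsBoundedUnder (· ≥ ·) atTop (fun q : ℕ => (q : ℝ) * distNearestInt (q * α)) :=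
    isBoundedUnder_of ⟨0, fun q => mul_nonneg (Nat.cast_nonneg q) (distNearestInt_nonneg _)⟩
  have := liminf_le_of_frequently_le (hfreq3.mono fun q h => le_of_lt h) hb
  linarith

open Filter in
lemma liminf_rs_le_liminf_f (hα : Irrational α) :
    liminf (rs α) atTop ≤ liminf (fun q : ℕ => (q : ℝ) * distNearestInt (q * α)) atTop := by
  classical
  apply le_of_forall_lt
  intro c hc
  obtain ⟨b, hb1, hb2⟩ := exists_between hc
  have hbddrs : IsBoundedUnder (· ≥ ·) atTop (rs α) :=
    isBoundedUnder_of ⟨0, rs_nonneg hα⟩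
  have hev : ∀ᶠ n in atTop, b < rs α n := eventually_lt_of_lt_liminf hb2 hbddrs
  obtain ⟨N0, hN0⟩ := eventually_atTop.1 hev
  have hNrs : ∀ n, max N0 2 ≤ n → b < rs α n := fun n hn =>
    hN0 n (le_trans (le_max_left _ _) hn)
  set N := max N0 2 with hNdef
  have hN2 : 2 ≤ N := le_max_right _ _
  have hevF : ∀ᶠ q : ℕ in atTop, b ≤ (q : ℝ) * distNearestInt (q * α) := by
    rw [eventually_atTop]
    refine ⟨max (Q α N).toNat 1, fun q hq => ?_⟩
    have hq1 : 1 ≤ q := le_trans (le_max_right _ _) hq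
    have hqQ : Q α N ≤ (q : ℤ) := by
      have h6 := le_trans (le_max_left _ _) hq
      omega
    obtain ⟨n, hnN, hQn, hQn1⟩ :
        ∃ n, N ≤ n ∧ Q α n ≤ (q:ℤ) ∧ (q:ℤ) < Q α (n+1) := by
      have hNle : N ≤ q + 2 := by
        obtain ⟨m, hm⟩ : ∃ m, N = m + 2 := ⟨N - 2, by omega⟩
        have h5 := Q_ge hα m
        rw [hm] at hqQ
        omega
      refine ⟨Nat.findGreatest (fun m => Q α m ≤ (q:ℤ)) (q + 2),
        Nat.le_findGreatest (P := fun m => Q α m ≤ (q:ℤ)) hNle hqQ,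
        Nat.findGreatest_spec (P := fun m => Q α m ≤ (q:ℤ)) hNle hqQ, ?_⟩
      by_cases hcase : Nat.findGreatest (fun m => Q α m ≤ (q:ℤ)) (q + 2) + 1 ≤ q + 2
      · have h7 := Nat.findGreatest_is_greatest
          (P := fun m => Q α m ≤ (q:ℤ)) (n := q + 2)
          (Nat.lt_succ_self _) hcase
        simpa using not_le.1 h7
      · have h8 : q + 3 ≤ Nat.findGreatest (fun m => Q α m ≤ (q:ℤ)) (q + 2) + 1 := by omega
        have h9 := Q_ge hα (q+1)
        have e : q + 1 + 2 = q + 3 := by omega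
        rw [e] at h9
        have h10 := Q_mono hα h8
        omega
    obtain ⟨m, rfl⟩ : ∃ m, n = m + 2 := ⟨n - 2, by omega⟩
    have hdist : D α (m+2) ≤ distNearestInt ((q:ℝ) * α) := by
      rw [distNearestInt_eq]
      have hq1' : (1:ℤ) ≤ (q:ℤ) := by exact_mod_cast hq1
      have hba := bestApprox hα (m+1) (q:ℤ) (round (((q:ℤ):ℝ) * α)) hq1' hQn1
      have hcast : (((q:ℤ)):ℝ) = ((q:ℕ):ℝ) := by push_cast; ring
      rw [hcast] at hba
      exact hba
    have hq_ge : ((Q α (m+2) : ℤ) : ℝ) ≤ ((q:ℕ) : ℝ) := by exact_mod_cast hQn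
    have hrsle : rs α (m+2) ≤ (q : ℝ) * distNearestInt (q * α) := by
      rw [rs]
      have h11 := distNearestInt_nonneg ((q:ℝ) * α)
      have hD := D_pos hα (m+2)
      have hQpos := Qr_pos hα (m+1)
      nlinarith [hdist, hq_ge]
    exact le_trans (le_of_lt (hNrs (m+2) hnN)) hrsle
  have hcobF : IsCoboundedUnder (· ≥ ·) atTop
      (fun q : ℕ => (q : ℝ) * distNearestInt (q * α)) := by
    refine ⟨1, fun a ha => ?_⟩
    obtain ⟨q, h1, h2⟩ := ((freq_f_le_one hα).and_eventually (eventually_map.1 ha)).exists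
    exact le_trans h2 h1
  have := le_liminf_of_le hcobF hevF
  linarith

lemma helper_le (a b : ℝ) (h : ∀ ε : ℝ, 0 < ε → ε ≤ 1/8 → a ≤ b + 8*ε) : a ≤ b := by
  by_contra hc
  push_neg at hc
  have h1 : 0 < min ((a-b)/16) (1/8) := by
    apply lt_min
    · linarith
    · norm_num
  have h2 := h _ h1 (min_le_right _ _)
  have h3 : 8 * min ((a-b)/16) (1/8) ≤ 8 * ((a-b)/16) := by
    have := min_le_left ((a-b)/16) (1/8)
    linarith
  linarith

lemma arith_t_lb {c t s2 r2 r1 : ℝ} (hs2sq : s2^2 = 2) (hs2gt : 1.41 < s2) (hs2lt : s2 < 1.42)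
    (hc_half : c < 1/2) (hc_pos : 0 < c) (hc_lb' : 1 < 2*s2*c) (htp : 0 < t) (htl : t ≤ 1)
    (hrnn : 0 ≤ r2) (h2 : c < r2) (h1 : c < r1) (req : r1 = t*(1 - t*r2)) :
    s2 - 1 < t := by
  have key : c < t - c * t^2 := by nlinarith [sq_nonneg t]
  by_contra hcon2
  push_neg at hcon2
  have f1 : 0 ≤ s2 - 1 - t := by linarith
  have f2 : 0 ≤ 1 - c * (t + s2 - 1) := by nlinarith
  nlinarith [mul_nonneg f1 f2]

lemma arith_ca_one {a t t' s2 : ℝ} (hs2sq : s2^2 = 2) (hs2gt : 1.41 < s2)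
    (ht1 : s2 - 1 < t) (ht2 : s2 - 1 < t') (ha : 2 ≤ a)
    (htrec : t' = 1 / (a + t)) : False := by
  have hdenpos : (0:ℝ) < a + t := by nlinarith
  have hlt : t' < s2 - 1 := by
    rw [htrec, div_lt_iff₀ hdenpos]
    nlinarith
  linarith

lemma arith_K1 {g eps Mr Lr : ℝ} (hg2 : g^2 = 1 - g) (hglb : (0.61:ℝ) < g) (hgub : g < 0.62)
    (hMr0 : 0 ≤ Mr) (hMr1 : Mr ≤ 1) (he : 0 < eps) (he8 : eps ≤ 1/8)
    (hLrge : (g-eps)*(1 - (g+eps)*(Mr+eps)) ≤ Lr) :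
    g - (1-g)*Mr ≤ Lr + 8*eps := by
  nlinarith [mul_nonneg he.le hMr0, sq_nonneg eps, mul_nonneg he.le he.le]

lemma arith_K2 {g eps Mr Lr : ℝ} (hg2 : g^2 = 1 - g) (hglb : (0.61:ℝ) < g) (hgub : g < 0.62)
    (hLr0 : 0 ≤ Lr) (hLr1 : Lr ≤ 1) (he : 0 < eps) (he8 : eps ≤ 1/8)
    (hMrle : Mr ≤ (g+eps)*(1 - (g-eps)*(Lr-eps))) :
    Mr ≤ g - (1-g)*Lr + 8*eps := by
  nlinarith [mul_nonneg he.le hLr0, sq_nonneg eps, mul_nonneg he.le he.le]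

lemma arith_fin1 {g s5 Lr Mr : ℝ} (hs5sq : s5^2 = 5) (hs5gt : 2.23 < s5) (hs5lt : s5 < 2.24)
    (hgdef : g = (s5 - 1)/2) (hLr0 : 0 ≤ Lr) (hMr0 : 0 ≤ Mr) (hMr1 : Mr ≤ 1)
    (hK1 : g - (1-g)*Mr ≤ Lr) (hK2 : Mr ≤ g - (1-g)*Lr) :
    1 ≤ Lr * s5 := by
  have hmul := mul_le_mul_of_nonneg_left hK2 (by nlinarith : (0:ℝ) ≤ 1 - g)
  nlinarith [hmul, hK1]

lemma arith_fin2 {g s5 Lr Mr : ℝ} (hs5sq : s5^2 = 5) (hs5gt : 2.23 < s5) (hs5lt : s5 < 2.24)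
    (hgdef : g = (s5 - 1)/2) (hLr0 : 0 ≤ Lr) (hMr0 : 0 ≤ Mr) (hMr1 : Mr ≤ 1) (hLM : Lr ≤ Mr)
    (hK1 : g - (1-g)*Mr ≤ Lr) (hK2 : Mr ≤ g - (1-g)*Lr) :
    Mr * s5 ≤ 1 := by
  have hmul := mul_le_mul_of_nonneg_left hK1 (by nlinarith : (0:ℝ) ≤ 1 - g)
  nlinarith [hmul, hK2]

lemma arith_c_gt {s2 c : ℝ} (h1 : 1 < 2*s2*c) (h2 : s2 < 1.42) (hc : 0 < c) : (0.35:ℝ) < c := by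
  nlinarith

lemma arith_step {t t' g s2 : ℝ} (ht' : t' = 1/(1+t)) (hg2 : g^2 = 1-g)
    (hglb : (0.61:ℝ) < g) (hgub : g < 0.62) (ht1 : s2 - 1 < t) (hs2gt : 1.41 < s2) :
    |t' - g| ≤ |t - g|/2 := by
  have htpos : (0:ℝ) < 1 + t := by linarith
  have hgpos : (0:ℝ) < g := by linarith
  have heq : t' - g = g * (g - t) / (1 + t) := by
    rw [ht']
    field_simp
    nlinarith [hg2]
  rw [heq, abs_div, abs_mul, abs_of_pos htpos, abs_of_pos hgpos, abs_sub_comm g t]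
  rw [div_le_div_iff₀ htpos (by norm_num : (0:ℝ) < 2)]
  nlinarith [mul_nonneg (abs_nonneg (t - g)) (by linarith : (0:ℝ) ≤ 1 + t - 2*g)]

lemma arith_low {g eps t r1 r2 Mr : ℝ} (req : r1 = t*(1-t*r2))
    (h1 : g - eps < t) (h2 : t < g + eps) (hr2 : r2 < Mr + eps) (hr2nn : 0 ≤ r2)
    (htnn : 0 ≤ t) (hr1nn : 0 ≤ r1) (hglb : (0.61:ℝ) < g) (hgub : g < 0.62)
    (he : 0 < eps) (he8 : eps ≤ 1/8) (hMr0 : 0 ≤ Mr) :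
    (g-eps)*(1-(g+eps)*(Mr+eps)) ≤ r1 := by
  have hεg : 0 < g - eps := by linarith
  rcases le_or_gt 0 (1 - (g+eps)*(Mr+eps)) with hB | hB
  · have hb1 : t * r2 ≤ (g+eps)*(Mr+eps) := by
      apply mul_le_mul (by linarith) (by linarith) hr2nn (by linarith)
    have e3 : (g-eps) * (1 - (g+eps)*(Mr+eps)) ≤ t * (1 - t * r2) := by
      apply mul_le_mul (by linarith) (by linarith) hB htnn
    linarith
  · nlinarith

lemma arith_high {g eps t r1 r2 Lr : ℝ} (req : r1 = t*(1-t*r2))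
    (h1 : g - eps < t) (h2 : t < g + eps) (hr2lb : Lr - eps < r2) (hr2ub : r2 ≤ 1)
    (hr2nn : 0 ≤ r2) (htnn : 0 ≤ t) (htub : t ≤ 1)
    (hglb : (0.61:ℝ) < g) (hgub : g < 0.62)
    (he : 0 < eps) (he8 : eps ≤ 1/8) (hLre : 0 ≤ Lr - eps) (hLr1 : Lr ≤ 1) :
    r1 ≤ (g+eps)*(1-(g-eps)*(Lr-eps)) := by
  have hb1 : (g-eps)*(Lr-eps) ≤ t * r2 :=
    mul_le_mul (by linarith) (by linarith) hLre htnn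
  have hd : 0 ≤ 1 - t * r2 := by nlinarith
  have e3 : t * (1 - t * r2) ≤ (g+eps) * (1 - (g-eps)*(Lr-eps)) := by
    apply mul_le_mul (by linarith) (by linarith) hd (by linarith)
  linarith


open Filter in
lemma rs_liminf_eq (hα : Irrational α)
    (hbig : 1 / (2 * Real.sqrt 2) < liminf (rs α) atTop) :
    liminf (rs α) atTop = 1 / Real.sqrt 5 := by
  have hs2sq : Real.sqrt 2 ^ 2 = 2 := Real.sq_sqrt (by norm_num)
  have hs2pos : 0 < Real.sqrt 2 := Real.sqrt_pos.2 (by norm_num)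
  have hs2gt : 1.41 < Real.sqrt 2 := by nlinarith
  have hs2lt : Real.sqrt 2 < 1.42 := by nlinarith
  have hs5sq : Real.sqrt 5 ^ 2 = 5 := Real.sq_sqrt (by norm_num)
  have hs5pos : 0 < Real.sqrt 5 := Real.sqrt_pos.2 (by norm_num)
  have hs5gt : 2.23 < Real.sqrt 5 := by nlinarith
  have hs5lt : Real.sqrt 5 < 2.24 := by nlinarith
  set s2 := Real.sqrt 2 with hs2def
  set g : ℝ := (Real.sqrt 5 - 1)/2 with hgdef
  have hg2 : g^2 = 1 - g := by rw [hgdef]; nlinarith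
  have hglb : (0.61:ℝ) < g := by rw [hgdef]; linarith
  have hgub : g < 0.62 := by rw [hgdef]; linarith
  set Lr := liminf (rs α) atTop with hLrdef
  set Mr := limsup (rs α) atTop with hMrdef
  have hbddge : IsBoundedUnder (· ≥ ·) atTop (rs α) := isBoundedUnder_of ⟨0, rs_nonneg hα⟩
  have hbddle : IsBoundedUnder (· ≤ ·) atTop (rs α) := isBoundedUnder_of ⟨1, rs_le_one hα⟩
  have hcobge : IsCoboundedUnder (· ≥ ·) atTop (rs α) := hbddle.isCoboundedUnder_ge
  have hcoble : IsCoboundedUnder (· ≤ ·) atTop (rs α) := hbddge.isCoboundedUnder_le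
  have hLM : Lr ≤ Mr := liminf_le_limsup hbddle hbddge
  have hMr1 : Mr ≤ 1 := limsup_le_of_le hcoble (Eventually.of_forall (rs_le_one hα))
  have hLr0 : 0 ≤ Lr := le_liminf_of_le hcobge (Eventually.of_forall (rs_nonneg hα))
  have hMr0 : 0 ≤ Mr := le_trans hLr0 hLM
  set c : ℝ := (1/(2*s2) + min Lr (1/2))/2 with hcdef
  have hmin_gt : 1/(2*s2) < min Lr (1/2) := by
    apply lt_min hbig
    rw [div_lt_iff₀ (by positivity)]
    linarith
  have hc_lb : 1/(2*s2) < c := by rw [hcdef]; linarith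
  have hc_Lr : c < Lr := by
    have h5 := min_le_left Lr (1/2)
    rw [hcdef]; linarith
  have hc_half : c < 1/2 := by
    have h5 := min_le_right Lr (1/2)
    rw [hcdef]; linarith
  have hc_pos : 0 < c := lt_trans (by positivity) hc_lb
  have hc_lb' : 1 < 2 * s2 * c := by
    rw [div_lt_iff₀ (by positivity)] at hc_lb
    linarith
  have hc_gt : (0.35:ℝ) < c := arith_c_gt hc_lb' hs2lt hc_pos
  clear_value c
  clear hcdef hmin_gt
  obtain ⟨N0, hN0⟩ := eventually_atTop.1 (eventually_lt_of_lt_liminf hc_Lr hbddge)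
  -- Step 1 : lower bound on t
  have St1 : ∀ n, N0 ≤ n → s2 - 1 < ts α (n+1) := by
    intro n hn
    exact arith_t_lb hs2sq hs2gt hs2lt hc_half hc_pos hc_lb' (ts_pos hα n)
      (ts_le_one hα (n+1)) (rs_nonneg hα (n+2)) (hN0 _ (by omega)) (hN0 _ (by omega))
      (rs_eq hα n)
  -- Step 2 : partial quotients are 1
  have St3 : ∀ n, N0 + 1 ≤ n → ts α (n+1) = 1/(1 + ts α n) := by
    intro n hn
    have ht1 : s2 - 1 < ts α n := by
      obtain ⟨m, rfl⟩ : ∃ m, n = m + 1 := ⟨n - 1, by omega⟩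
      exact St1 m (by omega)
    have hca1 : (ca α n : ℝ) = 1 := by
      by_contra hne
      have hca2 : (2:ℝ) ≤ (ca α n : ℝ) := by
        have h5 : (1:ℤ) ≤ ca α n := one_le_ca hα n
        have h6 : ca α n ≠ 1 := fun h => hne (by rw [h]; norm_num)
        have h7 : (2:ℤ) ≤ ca α n := by omega
        exact_mod_cast h7
      exact arith_ca_one hs2sq hs2gt ht1 (St1 n (by omega)) hca2 (ts_rec hα n)
    rw [ts_rec hα n, hca1]
  -- contraction towards g
  have hcontr : ∀ n, N0 + 1 ≤ n → |ts α (n+1) - g| ≤ |ts α n - g| / 2 := by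
    intro n hn
    have ht1 : s2 - 1 < ts α n := by
      obtain ⟨m, rfl⟩ : ∃ m, n = m + 1 := ⟨n - 1, by omega⟩
      exact St1 m (by omega)
    exact arith_step (St3 n hn) hg2 hglb hgub ht1 hs2gt
  have hbound : ∀ m : ℕ, |ts α (N0 + 1 + m) - g| ≤ (1/2:ℝ)^m := by
    intro m
    induction m with
    | zero =>
      simp only [pow_zero, Nat.add_zero]
      have h1 := ts_nonneg hα (N0+1)
      have h2 := ts_le_one hα (N0+1)
      rw [abs_le]
      constructor <;> linarith
    | succ k ih =>
      have e : N0 + 1 + (k+1) = (N0 + 1 + k) + 1 := by omega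
      rw [e]
      have h5 := hcontr (N0+1+k) (by omega)
      calc |ts α ((N0+1+k)+1) - g| ≤ |ts α (N0+1+k) - g|/2 := h5
      _ ≤ (1/2:ℝ)^k / 2 := by linarith
      _ = (1/2:ℝ)^(k+1) := by rw [pow_succ]; ring
  have St4 : Tendsto (ts α) atTop (nhds g) := by
    rw [← tendsto_add_atTop_iff_nat (N0+1)]
    have hpow : Tendsto (fun m : ℕ => (1/2:ℝ)^m) atTop (nhds 0) :=
      tendsto_pow_atTop_nhds_zero_of_lt_one (by norm_num) (by norm_num)
    have hlow : Tendsto (fun m : ℕ => g - (1/2:ℝ)^m) atTop (nhds g) := by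
      simpa using tendsto_const_nhds.sub hpow
    have hhigh : Tendsto (fun m : ℕ => g + (1/2:ℝ)^m) atTop (nhds g) := by
      simpa using tendsto_const_nhds.add hpow
    apply tendsto_of_tendsto_of_tendsto_of_le_of_le hlow hhigh
    · intro m
      have h5 := abs_le.1 (hbound m)
      have e : m + (N0+1) = N0 + 1 + m := by omega
      show g - (1/2:ℝ)^m ≤ ts α (m + (N0+1))
      rw [e]
      linarith [h5.1]
    · intro m
      have h5 := abs_le.1 (hbound m)
      have e : m + (N0+1) = N0 + 1 + m := by omega
      show ts α (m + (N0+1)) ≤ g + (1/2:ℝ)^m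
      rw [e]
      linarith [h5.2]
  clear hbound hcontr St3 St1 hN0
  -- the two key inequalities with epsilon
  have Keps : ∀ ε : ℝ, 0 < ε → ε ≤ 1/8 →
      (g - (1-g)*Mr ≤ Lr + 8*ε ∧ Mr ≤ g - (1-g)*Lr + 8*ε) := by
    intro ε hε hε8
    obtain ⟨N1, hN1⟩ := eventually_atTop.1
      (eventually_lt_of_limsup_lt (by linarith : Mr < Mr + ε) hbddle)
    obtain ⟨N2, hN2⟩ := eventually_atTop.1
      (eventually_lt_of_lt_liminf (by linarith : Lr - ε < Lr) hbddge)
    obtain ⟨N3, hN3⟩ := Metric.tendsto_atTop.1 St4 ε hε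
    set M := max (max N1 N2) (max N3 1) with hM
    have hM1 : 1 ≤ M := le_trans (le_max_right N3 1) (le_max_right _ _)
    have hts_close : ∀ n, M ≤ n → |ts α n - g| < ε := by
      intro n hn
      have h5 := hN3 n (le_trans (le_trans (le_max_left N3 1) (le_max_right _ _)) hn)
      rwa [Real.dist_eq] at h5
    have hLr1 : Lr ≤ 1 := le_trans hLM hMr1
    have hLre : 0 ≤ Lr - ε := by linarith
    constructor
    · have hLrge : (g-ε)*(1 - (g+ε)*(Mr+ε)) ≤ Lr := by
        apply le_liminf_of_le hcobge
        rw [eventually_atTop]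
        refine ⟨M, fun n hn => ?_⟩
        obtain ⟨m, rfl⟩ : ∃ m, n = m + 1 := ⟨n - 1, by omega⟩
        have habs := abs_lt.1 (hts_close (m+1) hn)
        have hr2ub : rs α (m+2) < Mr + ε := by
          apply hN1
          have h9 : N1 ≤ M := le_trans (le_max_left N1 N2) (le_max_left _ _)
          omega
        exact arith_low (rs_eq hα m) (by linarith [habs.1]) (by linarith [habs.2]) hr2ub
          (rs_nonneg hα (m+2)) (ts_nonneg hα (m+1)) (rs_nonneg hα (m+1)) hglb hgub hε hε8 hMr0
      exact arith_K1 hg2 hglb hgub hMr0 hMr1 hε hε8 hLrge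
    · have hMrle : Mr ≤ (g+ε)*(1 - (g-ε)*(Lr-ε)) := by
        apply limsup_le_of_le hcoble
        rw [eventually_atTop]
        refine ⟨M, fun n hn => ?_⟩
        obtain ⟨m, rfl⟩ : ∃ m, n = m + 1 := ⟨n - 1, by omega⟩
        have habs := abs_lt.1 (hts_close (m+1) hn)
        have hr2lb : Lr - ε < rs α (m+2) := by
          apply hN2
          have h9 : N2 ≤ M := le_trans (le_max_right N1 N2) (le_max_left _ _)
          omega
        exact arith_high (rs_eq hα m) (by linarith [habs.1]) (by linarith [habs.2]) hr2lb
          (rs_le_one hα (m+2)) (rs_nonneg hα (m+2)) (ts_nonneg hα (m+1)) (ts_le_one hα (m+1))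
          hglb hgub hε hε8 hLre hLr1
      exact arith_K2 hg2 hglb hgub hLr0 (le_trans hLM hMr1) hε hε8 hMrle
  have hK1 : g - (1-g)*Mr ≤ Lr := helper_le _ _ (fun ε h1 h2 => (Keps ε h1 h2).1)
  have hK2 : Mr ≤ g - (1-g)*Lr := helper_le _ _ (fun ε h1 h2 => (Keps ε h1 h2).2)
  have hfin1 : 1/Real.sqrt 5 ≤ Lr := by
    rw [div_le_iff₀ hs5pos]
    exact arith_fin1 hs5sq hs5gt hs5lt hgdef hLr0 hMr0 hMr1 hK1 hK2
  have hfin2 : Mr ≤ 1/Real.sqrt 5 := by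
    rw [le_div_iff₀ hs5pos]
    exact arith_fin2 hs5sq hs5gt hs5lt hgdef hLr0 hMr0 hMr1 hLM hK1 hK2
  exact le_antisymm (le_trans hLM hfin2) hfin1

end HurwitzAux

theorem hurwitz_second_constant (α : ℝ)
    (h : Filter.liminf (fun q : ℕ => (q : ℝ) * distNearestInt (q * α)) Filter.atTop
        ≠ 1 / Real.sqrt 5) :
    Filter.liminf (fun q : ℕ => (q : ℝ) * distNearestInt (q * α)) Filter.atTop
      ≤ 1 / (2 * Real.sqrt 2) := by
  by_contra hcon
  push_neg at hcon
  have hs2pos : 0 < Real.sqrt 2 := Real.sqrt_pos.2 (by norm_num)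
  have hbddF : Filter.IsBoundedUnder (· ≥ ·) Filter.atTop
      (fun q : ℕ => (q : ℝ) * distNearestInt (q * α)) :=
    Filter.isBoundedUnder_of
      ⟨0, fun q => mul_nonneg (Nat.cast_nonneg q) (HurwitzAux.distNearestInt_nonneg _)⟩
  have hirr : Irrational α := by
    by_contra hrat
    obtain ⟨x, hx⟩ := not_not.1 hrat
    have hfreq : ∃ᶠ q : ℕ in Filter.atTop, (q:ℝ) * distNearestInt (q * α) ≤ 0 := by
      have hden : Filter.Tendsto (fun k : ℕ => k * x.den) Filter.atTop Filter.atTop := by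
        apply Filter.tendsto_atTop_mono (fun k => ?_) Filter.tendsto_id
        exact Nat.le_mul_of_pos_right k (Nat.pos_of_ne_zero x.den_nz)
      apply hden.frequently
      apply Filter.Frequently.of_forall
      intro k
      have h9 : (x:ℝ) * (x.den:ℝ) = (x.num:ℝ) := by
        exact_mod_cast congrArg (Rat.cast : ℚ → ℝ) (Rat.mul_den_eq_num x)
      have hint : ((k * x.den : ℕ) : ℝ) * α = ((k * x.num : ℤ) : ℝ) := by
        rw [← hx]
        push_cast
        linear_combination (k:ℝ) * h9
      rw [hint, HurwitzAux.distNearestInt_intCast, mul_zero]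
    have hle := Filter.liminf_le_of_frequently_le hfreq hbddF
    have hp : (0:ℝ) < 1/(2*Real.sqrt 2) := by positivity
    linarith
  have h1 := HurwitzAux.liminf_f_le_liminf_rs hirr
  have h2 := HurwitzAux.liminf_rs_le_liminf_f hirr
  have h3 : 1/(2*Real.sqrt 2) < Filter.liminf (HurwitzAux.rs α) Filter.atTop :=
    lt_of_lt_of_le hcon h1
  have h4 := HurwitzAux.rs_liminf_eq hirr h3
  exact h (le_antisymm (le_trans h1 (le_of_eq h4)) (le_trans (le_of_eq h4.symm) h2))
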